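/- Every countable configuration x of a family of configurations F has an injective extremal realisation: there exist an extremal realisation (R,≤),ρ of F with ρ injective and ρR = x. -/

import Mathlib

universe u v w

/-- The image of a set under a partial function. -/
def pimage {α : Type u} {β : Type v} (f : α → Option β) (x : Set α) : Set β :=
  {b | ∃ a ∈ x, f a = some b}

/-- A family of configurations over the set of events `A`:
a non-empty family of subsets, whose underlying set is all of `A`,
closed under unions of finitely compatible subfamilies,
and satisfying the securing-chain condition. -/
structure ConfigFamily (A : Type u) where
  F : Set (Set A)
  nonempty : F.Nonempty
  covers : ∀ a : A, ∃ x ∈ F, a ∈ x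
  unionClosed : ∀ X ⊆ F, (∀ Y ⊆ X, Y.Finite → ∃ z ∈ F, ∀ y ∈ Y, y ⊆ z) → ⋃₀ X ∈ F
  secured : ∀ x ∈ F, ∀ e ∈ x, ∃ l : List A, l ≠ [] ∧ l.getLast? = some e ∧
    (∀ a ∈ l, a ∈ x) ∧ ∀ i, 0 < i → i ≤ l.length → {a | a ∈ l.take i} ∈ F

/-- A causal realisation of the family `C`: a partial order whose
principal lower sets are finite, together with a function to events
sending every down-closed subset to a configuration of the family. -/
structure Realisation {A : Type u} (C : ConfigFamily A) where
  carrier : Type u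
  le : carrier → carrier → Prop
  le_refl : ∀ a, le a a
  le_trans : ∀ a b c, le a b → le b c → le a c
  le_antisymm : ∀ a b, le a b → le b a → a = b
  finPast : ∀ e, {e' | le e' e}.Finite
  ρ : carrier → A
  real : ∀ x : Set carrier, (∀ a ∈ x, ∀ b, le b a → b ∈ x) → ρ '' x ∈ C.F

namespace Realisation

variable {A : Type u} {C : ConfigFamily A}

/-- Down-closed subsets of the carrier of a realisation. -/
def IsDown (r : Realisation C) (x : Set r.carrier) : Prop :=
  ∀ a ∈ x, ∀ b, r.le b a → b ∈ x

/-- The set `[a) = [a] \ {a}` of strict predecessors. -/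
def spred (r : Realisation C) (a : r.carrier) : Set r.carrier :=
  {b | r.le b a ∧ b ≠ a}

/-- The carrier has a top element. -/
def HasTop (r : Realisation C) : Prop := ∃ t, ∀ a, r.le a t

end Realisation

/-- A map of realisations: a partial surjective function between the carriers,
preserving down-closed subsets and commuting with the functions to events. -/
structure RealMap {A : Type u} {C : ConfigFamily A} (r r' : Realisation C) where
  f : r.carrier → Option r'.carrier
  surj : ∀ b, ∃ a, f a = some b
  presDown : ∀ x, r.IsDown x → r'.IsDown (pimage f x)
  commutes : ∀ a b, f a = some b → r.ρ a = r'.ρ b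

namespace RealMap

variable {A : Type u} {C : ConfigFamily A} {r r' r₀ : Realisation C}

/-- The map is total. -/
def IsTotal (m : RealMap r r') : Prop := ∀ a, ∃ b, m.f a = some b

/-- The map is an isomorphism of realisations: it has an inverse map of
realisations, given by the inverse relation. -/
def IsIso (m : RealMap r r') : Prop :=
  ∃ m' : RealMap r' r, ∀ a b, m.f a = some b ↔ m'.f b = some a

/-- `m : r → r₀` is a projection witnessed by `g`: `g` realises the carrier of
`r₀` as a subset of the carrier of `r` with the restricted order and restricted
function to events, and `m` is the inverse relation of this inclusion. -/
def IsProjectionVia (m : RealMap r r₀) (g : r₀.carrier → r.carrier) : Prop :=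
  Function.Injective g ∧ (∀ a b, r₀.le a b ↔ r.le (g a) (g b)) ∧
    (∀ a, r₀.ρ a = r.ρ (g a)) ∧ (∀ a b, m.f a = some b ↔ g b = a)

/-- `m` is a projection. -/
def IsProjection (m : RealMap r r₀) : Prop := ∃ g, m.IsProjectionVia g

end RealMap

/-- A realisation is extremal when every total map of realisations from it
is an isomorphism. -/
def Realisation.Extremal {A : Type u} {C : ConfigFamily A} (r : Realisation C) : Prop :=
  ∀ (r' : Realisation C) (m : RealMap r r'), m.IsTotal → m.IsIso

/-- A prime extremal realisation: extremal with a top element. -/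
def Realisation.PrimeExtremal {A : Type u} {C : ConfigFamily A} (r : Realisation C) : Prop :=
  r.Extremal ∧ r.HasTop

/-- Isomorphism of realisations. -/
def RealIso {A : Type u} {C : ConfigFamily A} (r r' : Realisation C) : Prop :=
  ∃ m : RealMap r r', m.IsIso

/-- `m` is the composite of `m₁` followed by `m₂` (as partial functions). -/
def CompEq {A : Type u} {C : ConfigFamily A} {r r' r'' : Realisation C}
    (m₁ : RealMap r r') (m₂ : RealMap r' r'') (m : RealMap r r'') : Prop :=
  ∀ a c, m.f a = some c ↔ ∃ b, m₁.f a = some b ∧ m₂.f b = some c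


section AuxProof

variable {A : Type u}

lemma ConfigFamily.empty_mem (C : ConfigFamily A) : (∅ : Set A) ∈ C.F := by
  have h := C.unionClosed ∅ (Set.empty_subset _) (fun Y hY _ => by
    obtain ⟨z, hz⟩ := C.nonempty
    exact ⟨z, hz, fun y hy => absurd (hY hy) (Set.notMem_empty y)⟩)
  simpa using h

lemma ConfigFamily.sUnion_mem (C : ConfigFamily A) {x : Set A} (hx : x ∈ C.F)
    {S : Set (Set A)} (hSF : S ⊆ C.F) (hSx : ∀ y ∈ S, y ⊆ x) : ⋃₀ S ∈ C.F :=
  C.unionClosed S hSF (fun Y hY _ => ⟨x, hx, fun y hy => hSx y (hY hy)⟩)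

lemma ConfigFamily.union_mem (C : ConfigFamily A) {x y z : Set A} (hx : x ∈ C.F)
    (hy : y ∈ C.F) (hz : z ∈ C.F) (hyx : y ⊆ x) (hzx : z ⊆ x) : y ∪ z ∈ C.F := by
  have h := C.sUnion_mem hx (S := {y, z}) ?_ ?_
  · simpa using h
  · intro s hs
    simp only [Set.mem_insert_iff, Set.mem_singleton_iff] at hs
    rcases hs with rfl | rfl <;> assumption
  · intro s hs
    simp only [Set.mem_insert_iff, Set.mem_singleton_iff] at hs
    rcases hs with rfl | rfl <;> assumption

/-- A "good order" on a configuration `x`: a partial order on `↥x` with finite pasts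
whose pasts are all configurations. -/
structure GoodOrder (C : ConfigFamily A) (x : Set A) (le : ↥x → ↥x → Prop) : Prop where
  refl : ∀ a, le a a
  trans : ∀ a b c, le a b → le b c → le a c
  antisymm : ∀ a b, le a b → le b a → a = b
  finPast : ∀ b, {a | le a b}.Finite
  pastMem : ∀ b, Subtype.val '' {a | le a b} ∈ C.F

/-- The realisation associated to a good order. -/
def GoodOrder.toReal {C : ConfigFamily A} {x : Set A} (hx : x ∈ C.F) {le : ↥x → ↥x → Prop}
    (h : GoodOrder C x le) : Realisation C where
  carrier := ↥x
  le := le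
  le_refl := h.refl
  le_trans := h.trans
  le_antisymm := h.antisymm
  finPast := h.finPast
  ρ := Subtype.val
  real := by
    intro D hD
    have key : Subtype.val '' D = ⋃₀ {s | ∃ a ∈ D, s = Subtype.val '' {b | le b a}} := by
      ext c
      constructor
      · rintro ⟨a, ha, rfl⟩
        exact ⟨Subtype.val '' {b | le b a}, ⟨a, ha, rfl⟩, ⟨a, h.refl a, rfl⟩⟩
      · rintro ⟨s, ⟨a, ha, rfl⟩, ⟨b, hb, rfl⟩⟩
        exact ⟨b, hD a ha b hb, rfl⟩
    rw [key]
    refine C.sUnion_mem hx ?_ ?_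
    · rintro s ⟨a, _, rfl⟩; exact h.pastMem a
    · rintro c ⟨a, _, rfl⟩ v ⟨b, _, rfl⟩; exact b.2

lemma exists_goodOrder (C : ConfigFamily A) {x : Set A} (hx : x ∈ C.F)
    (hcount : x.Countable) : ∃ le : ↥x → ↥x → Prop, GoodOrder C x le := by
  classical
  rcases isEmpty_or_nonempty ↥x with hemp | hne
  · exact ⟨Eq, ⟨fun a => rfl, fun a b c h1 h2 => h1.trans h2, fun a b h1 _ => h1,
      fun b => isEmptyElim b, fun b => isEmptyElim b⟩⟩
  · haveI : Countable ↥x := hcount.to_subtype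
    obtain ⟨e, he⟩ := exists_surjective_nat ↥x
    have hch : ∀ n : ℕ, ∃ l : List A, l ≠ [] ∧ l.getLast? = some (e n : A) ∧
        (∀ a ∈ l, a ∈ x) ∧ ∀ i, 0 < i → i ≤ l.length → {a | a ∈ l.take i} ∈ C.F :=
      fun n => C.secured x hx (e n) (e n).2
    choose l hlne hlast hlx hlpre using hch
    set pfx : ℕ → ℕ → Set A := fun n i => {a | a ∈ (l n).take i} with hpfxdef
    have pfx_sub : ∀ n i, pfx n i ⊆ x := fun n i a ha => hlx n a (List.take_subset i (l n) ha)
    have pfx_fin : ∀ n i, (pfx n i).Finite := fun n i => (l n).take i |>.finite_toSet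
    have pfx_mem : ∀ n i, pfx n i ∈ C.F := by
      intro n i
      rcases Nat.eq_zero_or_pos i with rfl | hi
      · simpa [pfx] using C.empty_mem
      rcases le_or_gt i (l n).length with hle | hlt
      · exact hlpre n i hi hle
      · have h1 : (l n).take i = (l n).take (l n).length := by
          rw [List.take_of_length_le (le_of_lt hlt), List.take_length]
        have h2 : pfx n i = pfx n (l n).length := by
          simp only [pfx]; rw [h1]
        rw [h2]
        exact hlpre n (l n).length (List.length_pos_iff.mpr (hlne n)) le_rfl
    set Z : ℕ → Set A := fun m => ⋃ (k : ℕ) (_ : k < m),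
      pfx (Nat.unpair k).1 (Nat.unpair k).2 with hZdef
    have mem_Z : ∀ (a : A) (m : ℕ),
        a ∈ Z m ↔ ∃ k < m, a ∈ pfx (Nat.unpair k).1 (Nat.unpair k).2 := by
      intro a m; simp [Z]
    have Z0 : Z 0 = ∅ := by
      ext a; simp [mem_Z]
    have Zmono : ∀ {m m' : ℕ}, m ≤ m' → Z m ⊆ Z m' := by
      intro m m' hmm a ha
      rw [mem_Z] at ha ⊢
      obtain ⟨k, hk, hka⟩ := ha
      exact ⟨k, lt_of_lt_of_le hk hmm, hka⟩
    have pfx_subset_Z : ∀ n i m, Nat.pair n i < m → pfx n i ⊆ Z m := by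
      intro n i m hm a ha
      rw [mem_Z]
      exact ⟨Nat.pair n i, hm, by rw [Nat.unpair_pair]; exact ha⟩
    have Zsucc : ∀ m, Z (m + 1) = Z m ∪ pfx (Nat.unpair m).1 (Nat.unpair m).2 := by
      intro m
      ext a
      simp only [mem_Z, Set.mem_union]
      constructor
      · rintro ⟨k, hk, hka⟩
        rcases Nat.lt_succ_iff_lt_or_eq.mp hk with h | rfl
        · exact Or.inl ⟨k, h, hka⟩
        · exact Or.inr hka
      · rintro (⟨k, hk, hka⟩ | hka)
        · exact ⟨k, Nat.lt_succ_of_lt hk, hka⟩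
        · exact ⟨m, Nat.lt_succ_self m, hka⟩
    have Z_sub_x : ∀ m, Z m ⊆ x := by
      intro m a ha
      rw [mem_Z] at ha
      obtain ⟨k, _, hka⟩ := ha
      exact pfx_sub _ _ hka
    have Z_fin : ∀ m, (Z m).Finite := by
      intro m
      induction m with
      | zero => rw [Z0]; exact Set.finite_empty
      | succ m ih => rw [Zsucc]; exact ih.union (pfx_fin _ _)
    have Z_mem : ∀ m, Z m ∈ C.F := by
      intro m
      induction m with
      | zero => rw [Z0]; exact C.empty_mem
      | succ m ih =>
        rw [Zsucc]
        exact C.union_mem hx ih (pfx_mem _ _) (Z_sub_x m) (pfx_sub _ _)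
    have hex : ∀ a : ↥x, ∃ m, (a : A) ∈ Z m := by
      intro a
      obtain ⟨n, rfl⟩ := he a
      have hmem : (e n : A) ∈ pfx n (l n).length := by
        simp only [pfx, Set.mem_setOf_eq, List.take_length]
        obtain ⟨h, h2⟩ := List.mem_getLast?_eq_getLast (by rw [hlast n]; rfl :
          (e n : A) ∈ (l n).getLast?)
        rw [h2]
        exact List.getLast_mem h
      exact ⟨Nat.pair n (l n).length + 1,
        pfx_subset_Z _ _ _ (Nat.lt_succ_self _) hmem⟩
    set rk : ↥x → ℕ := fun a => Nat.find (hex a) with hrkdef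
    have rk_spec : ∀ a, (a : A) ∈ Z (rk a) := fun a => Nat.find_spec (hex a)
    have rk_min : ∀ a m, m < rk a → (a : A) ∉ Z m := fun a m hm =>
      Nat.find_min (hex a) (show m < Nat.find (hex a) from hm)
    have rk_le_iff : ∀ (a : ↥x) (m : ℕ), rk a ≤ m ↔ (a : A) ∈ Z m := by
      intro a m
      constructor
      · intro h; exact Zmono h (rk_spec a)
      · intro h; exact (show Nat.find (hex a) ≤ m from Nat.find_le h)
    have rk_inj : ∀ a b : ↥x, rk a = rk b → a = b := by
      intro a b hab
      rcases Nat.eq_zero_or_pos (rk a) with h0 | hpos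
      · exfalso
        have := rk_spec a
        rw [h0, Z0] at this
        exact this
      obtain ⟨k, hk⟩ : ∃ k, rk a = k + 1 := ⟨rk a - 1, by omega⟩
      have ha1 : (a : A) ∈ Z (k + 1) := by rw [← hk]; exact rk_spec a
      have ha0 : (a : A) ∉ Z k := rk_min a k (by omega)
      have hkb : rk b = k + 1 := by omega
      have hb1 : (b : A) ∈ Z (k + 1) := hkb ▸ rk_spec b
      have hb0 : (b : A) ∉ Z k := by
        have := rk_min b k (by omega : k < rk b)
        exact this
      rw [Zsucc] at ha1 hb1
      have hpa : (a : A) ∈ pfx (Nat.unpair k).1 (Nat.unpair k).2 := ha1.resolve_left ha0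
      have hpb : (b : A) ∈ pfx (Nat.unpair k).1 (Nat.unpair k).2 := hb1.resolve_left hb0
      set n := (Nat.unpair k).1
      set i := (Nat.unpair k).2
      rcases Nat.eq_zero_or_pos i with hi0 | hipos
      · exfalso
        rw [hi0] at hpa
        simp [pfx] at hpa
      obtain ⟨j, hj⟩ : ∃ j, i = j + 1 := ⟨i - 1, by omega⟩
      have hksplit : Nat.pair n j < k := by
        have h1 : Nat.pair n j < Nat.pair n i := Nat.pair_lt_pair_right n (by omega)
        have h2 : Nat.pair n i = k := by
          have := Nat.pair_unpair k
          simp only [n, i] at *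
          exact this
        omega
      have hsubZ : pfx n j ⊆ Z k := pfx_subset_Z n j k hksplit
      have hget : ∀ c : A, c ∈ pfx n i → c ∉ Z k → (l n)[j]? = some c := by
        intro c hc hcz
        have hc' : c ∈ (l n).take (j + 1) := by rw [← hj]; exact hc
        rw [List.take_succ, List.mem_append] at hc'
        rcases hc' with h | h
        · exact absurd (hsubZ h) hcz
        · exact (Option.mem_toList.mp h)
      have h1 := hget _ hpa ha0
      have h2 := hget _ hpb hb0
      apply Subtype.val_injective
      rw [h1] at h2
      exact Option.some_inj.mp h2
    refine ⟨fun a b => rk a ≤ rk b, ⟨fun a => le_rfl, fun a b c h1 h2 => h1.trans h2,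
      fun a b h1 h2 => rk_inj a b (le_antisymm h1 h2), ?_, ?_⟩⟩
    · intro b
      have hset : {a : ↥x | rk a ≤ rk b} = Subtype.val ⁻¹' (Z (rk b)) := by
        ext a; exact rk_le_iff a (rk b)
      rw [hset]
      exact (Z_fin (rk b)).preimage Subtype.val_injective.injOn
    · intro b
      have himg : Subtype.val '' {a : ↥x | rk a ≤ rk b} = Z (rk b) := by
        ext c
        constructor
        · rintro ⟨a, ha, rfl⟩
          exact (rk_le_iff a (rk b)).mp ha
        · intro hc
          exact ⟨⟨c, Z_sub_x _ hc⟩, (rk_le_iff ⟨c, Z_sub_x _ hc⟩ (rk b)).mpr hc, rfl⟩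
      rw [himg]
      exact Z_mem (rk b)

lemma chain_sInter_mem {α : Type v} {c : Set (Set α)} (hc : IsChain (· ⊆ ·) c)
    {S : Set α} (hS : S ∈ c) (hfin : S.Finite) : ∃ m ∈ c, ⋂₀ c = m := by
  have hsub : {t ∈ c | t ⊆ S}.Finite :=
    hfin.finite_subsets.subset (fun t ht => ht.2)
  obtain ⟨m, ⟨hmc, hmS⟩, hmin⟩ := Set.Finite.exists_minimalFor id _ hsub ⟨S, hS, subset_rfl⟩
  have hleast : ∀ t ∈ c, m ⊆ t := by
    intro t ht
    rcases eq_or_ne m t with rfl | hne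
    · exact subset_rfl
    rcases hc hmc ht hne with h | h
    · exact h
    · exact hmin ⟨ht, h.trans hmS⟩ h
  exact ⟨m, hmc, Set.Subset.antisymm (Set.sInter_subset_of_mem hmc)
    (Set.subset_sInter hleast)⟩

end AuxProof

/-- Every countable configuration of a family of configurations has an
injective extremal realisation with image the configuration. -/
theorem stmt1 {A : Type u} (C : ConfigFamily A) (x : Set A) (hx : x ∈ C.F)
    (hcount : x.Countable) :
    ∃ r : Realisation C, r.Extremal ∧ Function.Injective r.ρ ∧ Set.range r.ρ = x := by
  classical
  obtain ⟨le₀, h₀⟩ := exists_goodOrder C hx hcount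
  set S : Set (Set (↥x × ↥x)) := {R | GoodOrder C x (fun a b => (a, b) ∈ R)} with hSdef
  have hR₀ : {p : ↥x × ↥x | le₀ p.1 p.2} ∈ S := h₀
  have hchainCond : ∀ c ⊆ S, IsChain (· ⊆ ·) c → c.Nonempty →
      ∃ lb ∈ S, ∀ s ∈ c, lb ⊆ s := by
    intro c hcS hchain ⟨R₁, hR₁⟩
    refine ⟨⋂₀ c, ?_, fun s hs => Set.sInter_subset_of_mem hs⟩
    refine ⟨?_, ?_, ?_, ?_, ?_⟩
    · intro a R hR; exact (hcS hR).refl a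
    · intro a b d h1 h2 R hR; exact (hcS hR).trans a b d (h1 R hR) (h2 R hR)
    · intro a b h1 h2; exact (hcS hR₁).antisymm a b (h1 _ hR₁) (h2 _ hR₁)
    · intro b
      exact ((hcS hR₁).finPast b).subset (fun a ha => ha _ hR₁)
    · intro b
      have hchain' : IsChain (· ⊆ ·) {P : Set ↥x | ∃ R ∈ c, P = {a | (a, b) ∈ R}} := by
        rintro _ ⟨R, hR, rfl⟩ _ ⟨R', hR', rfl⟩ hne
        rcases eq_or_ne R R' with rfl | hRR
        · exact absurd rfl hne
        rcases hchain hR hR' hRR with h | h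
        · exact Or.inl (fun a ha => h ha)
        · exact Or.inr (fun a ha => h ha)
      obtain ⟨m, hm, heq⟩ := chain_sInter_mem hchain'
        (show {a : ↥x | (a, b) ∈ R₁} ∈ {P : Set ↥x | ∃ R ∈ c, P = {a | (a, b) ∈ R}} from
          ⟨R₁, hR₁, rfl⟩) ((hcS hR₁).finPast b)
      obtain ⟨R', hR', rfl⟩ := hm
      have hsets : {a : ↥x | (a, b) ∈ ⋂₀ c} = {a | (a, b) ∈ R'} := by
        rw [← heq]
        ext a
        simp only [Set.mem_setOf_eq, Set.mem_sInter]
        constructor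
        · rintro h _ ⟨R, hR, rfl⟩; exact h R hR
        · intro h R hR; exact h _ ⟨R, hR, rfl⟩
      rw [hsets]
      exact (hcS hR').pastMem b
  obtain ⟨Rm, _, hRm⟩ := zorn_superset_nonempty S hchainCond _ hR₀
  have hG : GoodOrder C x (fun a b => (a, b) ∈ Rm) := hRm.prop
  refine ⟨hG.toReal hx, ?_, Subtype.val_injective, Subtype.range_val⟩
  intro r' mm hTot
  choose f' hf' using hTot
  have finj : Function.Injective f' := by
    intro a b hab
    have h1 := mm.commutes a (f' a) (hf' a)
    have h2 := mm.commutes b (f' b) (hf' b)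
    rw [hab] at h1
    exact Subtype.val_injective (h1.trans h2.symm)
  have fsurj : Function.Surjective f' := by
    intro y
    obtain ⟨a, ha⟩ := mm.surj y
    refine ⟨a, ?_⟩
    rw [hf' a] at ha
    exact Option.some_inj.mp ha
  have key : ∀ a b : ↥x, r'.le (f' a) (f' b) → (a, b) ∈ Rm := by
    intro a b hle
    have hD : (hG.toReal hx).IsDown {d | (d, b) ∈ Rm} :=
      fun p hp q hq => hG.trans q p b hq hp
    have hDown := mm.presDown _ hD
    have hb : f' b ∈ pimage mm.f {d | (d, b) ∈ Rm} := ⟨b, hG.refl b, hf' b⟩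
    have ha : f' a ∈ pimage mm.f {d | (d, b) ∈ Rm} := hDown _ hb _ hle
    obtain ⟨d, hd, hfd⟩ := ha
    have hda : d = a := by
      have h1 := mm.commutes d (f' a) hfd
      have h2 := mm.commutes a (f' a) (hf' a)
      exact Subtype.val_injective (h1.trans h2.symm)
    exact hda ▸ hd
  have hR' : {p : ↥x × ↥x | r'.le (f' p.1) (f' p.2)} ∈ S := by
    refine ⟨fun a => r'.le_refl _, fun a b d h1 h2 => r'.le_trans _ _ _ h1 h2,
      fun a b h1 h2 => finj (r'.le_antisymm _ _ h1 h2), ?_, ?_⟩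
    · intro b
      exact Set.Finite.subset ((r'.finPast (f' b)).preimage finj.injOn) (fun a ha => ha)
    · intro b
      show Subtype.val '' {a : ↥x | r'.le (f' a) (f' b)} ∈ C.F
      have hmem := r'.real {y | r'.le y (f' b)}
        (fun p hp q hq => r'.le_trans q p (f' b) hq hp)
      have himg : Subtype.val '' {a : ↥x | r'.le (f' a) (f' b)} =
          r'.ρ '' {y | r'.le y (f' b)} := by
        ext v
        constructor
        · rintro ⟨a, ha, rfl⟩
          exact ⟨f' a, ha, (mm.commutes a (f' a) (hf' a)).symm⟩
        · rintro ⟨y, hy, rfl⟩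
          obtain ⟨a, rfl⟩ := fsurj y
          exact ⟨a, hy, mm.commutes a (f' a) (hf' a)⟩
      rw [himg]
      exact hmem
  have h1sub : {p : ↥x × ↥x | r'.le (f' p.1) (f' p.2)} ⊆ Rm :=
    fun p hp => key p.1 p.2 hp
  have h2sub : Rm ⊆ {p : ↥x × ↥x | r'.le (f' p.1) (f' p.2)} :=
    hRm.2 hR' h1sub
  let g := Function.surjInv fsurj
  have hfg : ∀ y, f' (g y) = y := fun y => Function.surjInv_eq fsurj y
  have hgf : ∀ a, g (f' a) = a := fun a => finj (hfg (f' a))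
  refine ⟨⟨fun y => some (g y), ?_, ?_, ?_⟩, ?_⟩
  · intro a; exact ⟨f' a, by show some (g (f' a)) = some a; rw [hgf a]⟩
  · rintro D hD a ⟨y, hy, hy2⟩ b hb
    have hya : y = f' a := by
      have h := Option.some_inj.mp hy2
      rw [← h, hfg]
    refine ⟨f' b, ?_, by show some (g (f' b)) = some b; rw [hgf b]⟩
    have hle' : r'.le (f' b) (f' a) := h2sub hb
    exact hD y (hya ▸ hy) (f' b) (hya ▸ hle')
  · intro y a hya
    have hga : g y = a := Option.some_inj.mp hya
    have hyf : y = f' a := by rw [← hga, hfg]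
    rw [hyf]
    exact (mm.commutes a (f' a) (hf' a)).symm
  · intro a b
    constructor
    · intro h
      have hb : b = f' a := by
        rw [hf' a] at h
        exact (Option.some_inj.mp h).symm
      rw [hb]
      simp [hgf]
    · intro h
      have hga : g b = a := Option.some_inj.mp h
      have hb : b = f' a := by rw [← hga, hfg]
      rw [hb, hf']
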